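/- Let Q be a finite quiver without sinks over a field k, L = L(Q) the Leavitt path algebra, and E = kQ₀ ⊆ L. Then there is a unique graded E-derivation D : L → ⊕_{i∈Q₀} Le_i ⊗ sk ⊗ e_iL of degree −1 satisfying D(α) = −α ⊗ s ⊗ e_{s(α)} and D(α*) = −e_{s(α)} ⊗ s ⊗ α* for every arrow α ∈ Q₁. -/

import Mathlib

noncomputable section
open scoped Classical

/-- The Koszul sign `(-1)^e`, for an integer exponent `e`. -/
def ksign (e : ℤ) : ℤ := if Even e then 1 else -1

/-- A `ℤ`-graded vector space over `k`. -/
structure GradedSpace (k : Type) [Field k] : Type 1 where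
  carrier : Type
  [acg : AddCommGroup carrier]
  [mod : Module k carrier]
  grading : ℤ → Submodule k carrier

attribute [instance] GradedSpace.acg GradedSpace.mod

/-! ## Quivers, Leavitt path algebras and radical square zero algebras -/

section Quivers

/-- a finite quiver `Q = (Q₀, Q₁; s, t)` -/
structure QuiverData : Type 1 where
  V : Type
  A : Type
  [fintypeV : Fintype V]
  [fintypeA : Fintype A]
  [decV : DecidableEq V]
  [decA : DecidableEq A]
  src : A → V
  tgt : A → V

attribute [instance] QuiverData.fintypeV QuiverData.fintypeA QuiverData.decV QuiverData.decA

/-- `Q` has no sinks: every vertex is the source of some arrow. -/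
def QuiverData.NoSinks (Q : QuiverData) : Prop := ∀ v : Q.V, ∃ a : Q.A, Q.src a = v

/-- generators of the Leavitt path algebra: vertices, arrows and ghost arrows -/
inductive LGen (Q : QuiverData) : Type
  | vertex : Q.V → LGen Q
  | arrow : Q.A → LGen Q
  | ghost : Q.A → LGen Q

variable (k : Type) [Field k] (Q : QuiverData)

open FreeAlgebra

/-- The defining relations of the Leavitt path algebra `L(Q)`: the path algebra relations
of the double quiver `Q̄` together with the first and second Cuntz–Krieger relations. -/
inductive LeavittRel : FreeAlgebra k (LGen Q) → FreeAlgebra k (LGen Q) → Prop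
  | vertex_mul (i j : Q.V) :
      LeavittRel (ι k (LGen.vertex i) * ι k (LGen.vertex j))
        (if i = j then ι k (LGen.vertex i) else 0)
  | sum_vertices : LeavittRel (∑ i : Q.V, ι k (LGen.vertex i)) 1
  | arrow_tgt (a : Q.A) :
      LeavittRel (ι k (LGen.vertex (Q.tgt a)) * ι k (LGen.arrow a)) (ι k (LGen.arrow a))
  | arrow_src (a : Q.A) :
      LeavittRel (ι k (LGen.arrow a) * ι k (LGen.vertex (Q.src a))) (ι k (LGen.arrow a))
  | ghost_src (a : Q.A) :
      LeavittRel (ι k (LGen.vertex (Q.src a)) * ι k (LGen.ghost a)) (ι k (LGen.ghost a))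
  | ghost_tgt (a : Q.A) :
      LeavittRel (ι k (LGen.ghost a) * ι k (LGen.vertex (Q.tgt a))) (ι k (LGen.ghost a))
  | ck1 (a b : Q.A) (h : Q.src a = Q.src b) :
      LeavittRel (ι k (LGen.arrow a) * ι k (LGen.ghost b))
        (if a = b then ι k (LGen.vertex (Q.tgt a)) else 0)
  | ck2 (v : Q.V) :
      LeavittRel (∑ a ∈ Finset.univ.filter (fun a => Q.src a = v),
          ι k (LGen.ghost a) * ι k (LGen.arrow a))
        (ι k (LGen.vertex v))

/-- the Leavitt path algebra `L = L(Q)` over `k` -/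
abbrev LeavittAlg := RingQuot (LeavittRel k Q)

/-- the canonical algebra map from the free algebra onto `L(Q)` -/
abbrev leavittMk : FreeAlgebra k (LGen Q) →ₐ[k] LeavittAlg k Q :=
  RingQuot.mkAlgHom k (LeavittRel k Q)

/-- the image of a generator in `L(Q)` -/
def lgen (g : LGen Q) : LeavittAlg k Q := leavittMk k Q (ι k g)

/-- the idempotent `e_i ∈ L(Q)` attached to a vertex -/
def lvert (i : Q.V) : LeavittAlg k Q := lgen k Q (LGen.vertex i)

/-- the degree of a generator: `|e_i| = 0`, `|α| = 1`, `|α*| = -1` -/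
def lgenDeg : LGen Q → ℤ
  | LGen.vertex _ => 0
  | LGen.arrow _ => 1
  | LGen.ghost _ => -1

/-- The canonical `ℤ`-grading of the Leavitt path algebra: the degree-`n` component is
spanned by the monomials in the generators of total degree `n`. -/
def leavittGrading (n : ℤ) : Submodule k (LeavittAlg k Q) :=
  Submodule.span k {x | ∃ w : List (LGen Q),
    (w.map (lgenDeg Q)).sum = n ∧ x = (w.map (lgen k Q)).prod}

/-- The Leavitt path algebra `L(Q)` as a graded space (it is viewed as a dg algebra with
zero differential). -/
def LeavittSpace : GradedSpace k where
  carrier := LeavittAlg k Q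
  grading := leavittGrading k Q

/-- generators of the path algebra `kQ` -/
inductive PGen (Q : QuiverData) : Type
  | vertex : Q.V → PGen Q
  | arrow : Q.A → PGen Q

/-- the defining relations of the radical square zero algebra `kQ/J²` -/
inductive RadSqRel : FreeAlgebra k (PGen Q) → FreeAlgebra k (PGen Q) → Prop
  | vertex_mul (i j : Q.V) :
      RadSqRel (ι k (PGen.vertex i) * ι k (PGen.vertex j))
        (if i = j then ι k (PGen.vertex i) else 0)
  | sum_vertices : RadSqRel (∑ i : Q.V, ι k (PGen.vertex i)) 1
  | arrow_tgt (a : Q.A) :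
      RadSqRel (ι k (PGen.vertex (Q.tgt a)) * ι k (PGen.arrow a)) (ι k (PGen.arrow a))
  | arrow_src (a : Q.A) :
      RadSqRel (ι k (PGen.arrow a) * ι k (PGen.vertex (Q.src a))) (ι k (PGen.arrow a))
  | arrow_orth (a : Q.A) (j : Q.V) (h : j ≠ Q.tgt a) :
      RadSqRel (ι k (PGen.vertex j) * ι k (PGen.arrow a)) 0
  | arrow_orth' (a : Q.A) (j : Q.V) (h : j ≠ Q.src a) :
      RadSqRel (ι k (PGen.arrow a) * ι k (PGen.vertex j)) 0
  | rad_sq (a b : Q.A) : RadSqRel (ι k (PGen.arrow a) * ι k (PGen.arrow b)) 0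

/-- the radical square zero algebra `Λ = kQ/J²` -/
abbrev RadSqAlg := RingQuot (RadSqRel k Q)

end Quivers

section Derivation

open TensorProduct

variable (k : Type) [Field k] (Q : QuiverData)

/-- The graded `L`-`L`-bimodule `⊕_{i∈Q₀} Le_i ⊗ sk ⊗ e_iL`, realized as the subspace of
`L ⊗ L` spanned by the elements `(a e_i) ⊗ (e_i b)`; the shift `sk` only affects degrees,
which are taken into account in `gradedDegMinusOne` below. -/
def NSub : Submodule k (LeavittAlg k Q ⊗[k] LeavittAlg k Q) :=
  Submodule.span k {z | ∃ (i : Q.V) (a b : LeavittAlg k Q),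
    z = (a * lvert k Q i) ⊗ₜ[k] (lvert k Q i * b)}

/-- the degree-`n` part of `L ⊗ L` -/
def TGrading (n : ℤ) : Submodule k (LeavittAlg k Q ⊗[k] LeavittAlg k Q) :=
  Submodule.span k {z | ∃ (m₁ m₂ : ℤ) (a b : LeavittAlg k Q),
    a ∈ leavittGrading k Q m₁ ∧ b ∈ leavittGrading k Q m₂ ∧ m₁ + m₂ = n ∧
      z = a ⊗ₜ[k] b}

/-- the left `L`-action on `L ⊗ L` -/
def lAct (x : LeavittAlg k Q) :
    LeavittAlg k Q ⊗[k] LeavittAlg k Q →ₗ[k] LeavittAlg k Q ⊗[k] LeavittAlg k Q :=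
  LinearMap.rTensor _ (LinearMap.mulLeft k x)

/-- the right `L`-action on `L ⊗ L` -/
def rAct (y : LeavittAlg k Q) :
    LeavittAlg k Q ⊗[k] LeavittAlg k Q →ₗ[k] LeavittAlg k Q ⊗[k] LeavittAlg k Q :=
  LinearMap.lTensor _ (LinearMap.mulRight k y)

end Derivation


section Aux
open TensorProduct

variable (k : Type) [Field k] (Q : QuiverData)

lemma lrel {x y : FreeAlgebra k (LGen Q)} (h : LeavittRel k Q x y) :
    leavittMk k Q x = leavittMk k Q y := RingQuot.mkAlgHom_rel k h

lemma lvert_mul (i j : Q.V) :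
    lvert k Q i * lvert k Q j = if i = j then lvert k Q i else 0 := by
  have := lrel k Q (LeavittRel.vertex_mul i j)
  simpa [lgen, lvert, map_mul, apply_ite (leavittMk k Q)] using this

lemma sum_lvert : ∑ i : Q.V, lvert k Q i = 1 := by
  have := lrel k Q (LeavittRel.sum_vertices (k := k) (Q := Q))
  simpa [lgen, lvert, map_sum] using this

lemma tgt_mul_arrow (a : Q.A) :
    lvert k Q (Q.tgt a) * lgen k Q (LGen.arrow a) = lgen k Q (LGen.arrow a) := by
  have := lrel k Q (LeavittRel.arrow_tgt (k := k) a)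
  simpa [lgen, lvert, map_mul] using this

lemma arrow_mul_src (a : Q.A) :
    lgen k Q (LGen.arrow a) * lvert k Q (Q.src a) = lgen k Q (LGen.arrow a) := by
  have := lrel k Q (LeavittRel.arrow_src (k := k) a)
  simpa [lgen, lvert, map_mul] using this

lemma src_mul_ghost (a : Q.A) :
    lvert k Q (Q.src a) * lgen k Q (LGen.ghost a) = lgen k Q (LGen.ghost a) := by
  have := lrel k Q (LeavittRel.ghost_src (k := k) a)
  simpa [lgen, lvert, map_mul] using this

lemma ghost_mul_tgt (a : Q.A) :
    lgen k Q (LGen.ghost a) * lvert k Q (Q.tgt a) = lgen k Q (LGen.ghost a) := by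
  have := lrel k Q (LeavittRel.ghost_tgt (k := k) a)
  simpa [lgen, lvert, map_mul] using this

lemma arrow_mul_ghost (a b : Q.A) (h : Q.src a = Q.src b) :
    lgen k Q (LGen.arrow a) * lgen k Q (LGen.ghost b) =
      if a = b then lvert k Q (Q.tgt a) else 0 := by
  have := lrel k Q (LeavittRel.ck1 (k := k) a b h)
  simpa [lgen, lvert, map_mul, apply_ite (leavittMk k Q)] using this

lemma ck2_sum (v : Q.V) :
    ∑ a ∈ Finset.univ.filter (fun a => Q.src a = v),
      lgen k Q (LGen.ghost a) * lgen k Q (LGen.arrow a) = lvert k Q v := by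
  have := lrel k Q (LeavittRel.ck2 (k := k) (Q := Q) v)
  simpa [lgen, lvert, map_sum, map_mul] using this

end Aux
section Aux2
open TensorProduct

variable (k : Type) [Field k] (Q : QuiverData)

lemma lneg_mul (x y : LeavittAlg k Q) : -x * y = -(x * y) := neg_mul x y
lemma lmul_neg (x y : LeavittAlg k Q) : x * -y = -(x * y) := mul_neg x y
lemma lneg_mul_neg (x y : LeavittAlg k Q) : -x * -y = x * y := neg_mul_neg x y
lemma lneg_inj {x y : LeavittAlg k Q} (h : x = y) : -x = -y := congrArg Neg.neg h

/-- images of the generators under the sign automorphism -/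
def sgen : LGen Q → LeavittAlg k Q
  | LGen.vertex i => lvert k Q i
  | LGen.arrow a => -lgen k Q (LGen.arrow a)
  | LGen.ghost a => -lgen k Q (LGen.ghost a)

lemma sigma0_rel : ∀ ⦃x y : FreeAlgebra k (LGen Q)⦄, LeavittRel k Q x y →
    FreeAlgebra.lift k (sgen k Q) x = FreeAlgebra.lift k (sgen k Q) y := by
  intro x y h
  induction h with
  | vertex_mul i j =>
      simp only [map_mul, FreeAlgebra.lift_ι_apply, sgen, apply_ite (FreeAlgebra.lift k (sgen k Q)),
        map_zero]
      exact lvert_mul k Q i j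
  | sum_vertices =>
      simp only [map_sum, FreeAlgebra.lift_ι_apply, sgen, map_one]
      exact sum_lvert k Q
  | arrow_tgt a =>
      simp only [map_mul, FreeAlgebra.lift_ι_apply, sgen, lmul_neg]
      exact lneg_inj k Q (tgt_mul_arrow k Q a)
  | arrow_src a =>
      simp only [map_mul, FreeAlgebra.lift_ι_apply, sgen, lneg_mul]
      exact lneg_inj k Q (arrow_mul_src k Q a)
  | ghost_src a =>
      simp only [map_mul, FreeAlgebra.lift_ι_apply, sgen, lmul_neg]
      exact lneg_inj k Q (src_mul_ghost k Q a)
  | ghost_tgt a =>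
      simp only [map_mul, FreeAlgebra.lift_ι_apply, sgen, lneg_mul]
      exact lneg_inj k Q (ghost_mul_tgt k Q a)
  | ck1 a b h =>
      simp only [map_mul, FreeAlgebra.lift_ι_apply, sgen,
        apply_ite (FreeAlgebra.lift k (sgen k Q)), map_zero]
      rw [lneg_mul_neg]
      exact arrow_mul_ghost k Q a b h
  | ck2 v =>
      simp only [map_sum, map_mul, FreeAlgebra.lift_ι_apply, sgen, lneg_mul_neg]
      exact ck2_sum k Q v

/-- the sign automorphism of `L(Q)` : identity on `e_i`, `-1` on arrows and ghost arrows -/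
def lsigma : LeavittAlg k Q →ₐ[k] LeavittAlg k Q :=
  RingQuot.liftAlgHom k ⟨FreeAlgebra.lift k (sgen k Q), sigma0_rel k Q⟩

lemma lsigma_lgen (g : LGen Q) : lsigma k Q (lgen k Q g) = sgen k Q g := by
  rw [lgen, lsigma, RingQuot.liftAlgHom_mkAlgHom_apply, FreeAlgebra.lift_ι_apply]

end Aux2
section Aux3
open TensorProduct

variable (k : Type) [Field k] (Q : QuiverData)

lemma lneg_tmul (a b : LeavittAlg k Q) :
    (-a) ⊗ₜ[k] b = -(a ⊗ₜ[k] b) := TensorProduct.neg_tmul a b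

lemma ltmul_neg (a b : LeavittAlg k Q) :
    a ⊗ₜ[k] (-b) = -(a ⊗ₜ[k] b) := TensorProduct.tmul_neg a b

lemma tmneg_mul (x y : LeavittAlg k Q ⊗[k] LeavittAlg k Q) : -x * y = -(x * y) := by
  have h : -x * y + x * y = 0 := by rw [← add_mul, show -x + x = 0 from neg_add_cancel x, zero_mul]
  exact @eq_neg_of_add_eq_zero_left (LeavittAlg k Q ⊗[k] LeavittAlg k Q) _ (-x * y) (x * y) h

lemma tmmul_neg (x y : LeavittAlg k Q ⊗[k] LeavittAlg k Q) : x * -y = -(x * y) := by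
  have h : x * -y + x * y = 0 := by rw [← mul_add, show -y + y = 0 from neg_add_cancel y, mul_zero]
  exact @eq_neg_of_add_eq_zero_left (LeavittAlg k Q ⊗[k] LeavittAlg k Q) _ (x * -y) (x * y) h

lemma tmneg_mul_neg (x y : LeavittAlg k Q ⊗[k] LeavittAlg k Q) : -x * -y = x * y := by
  rw [tmneg_mul, tmmul_neg]; exact neg_neg (x * y)
lemma tmneg_inj (x y : LeavittAlg k Q ⊗[k] LeavittAlg k Q) : -x = -y ↔ x = y :=
  @neg_inj (LeavittAlg k Q ⊗[k] LeavittAlg k Q) _ x y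
lemma tmneg_neg (x : LeavittAlg k Q ⊗[k] LeavittAlg k Q) : - -x = x := neg_neg x
lemma tmadd_neg (x : LeavittAlg k Q ⊗[k] LeavittAlg k Q) : x + -x = 0 := add_neg_cancel x
lemma tmsub_self (x : LeavittAlg k Q ⊗[k] LeavittAlg k Q) : x - x = 0 := sub_self x
lemma tmsum_sub (s : Finset Q.A) (f g : Q.A → LeavittAlg k Q ⊗[k] LeavittAlg k Q) :
    ∑ c ∈ s, (f c - g c) = ∑ c ∈ s, f c - ∑ c ∈ s, g c := Finset.sum_sub_distrib f g

/-- images of the generators in the 2×2 triangular matrix algebra over `L ⊗ L` -/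
def fM : LGen Q → Matrix (Fin 2) (Fin 2) (LeavittAlg k Q ⊗[k] LeavittAlg k Q)
  | LGen.vertex i => !![lvert k Q i ⊗ₜ[k] 1, 0; 0, (1 : LeavittAlg k Q) ⊗ₜ[k] lvert k Q i]
  | LGen.arrow a => !![(-lgen k Q (LGen.arrow a)) ⊗ₜ[k] 1,
      -(lgen k Q (LGen.arrow a) ⊗ₜ[k] lvert k Q (Q.src a));
      0, (1 : LeavittAlg k Q) ⊗ₜ[k] lgen k Q (LGen.arrow a)]
  | LGen.ghost a => !![(-lgen k Q (LGen.ghost a)) ⊗ₜ[k] 1,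
      -(lvert k Q (Q.src a) ⊗ₜ[k] lgen k Q (LGen.ghost a));
      0, (1 : LeavittAlg k Q) ⊗ₜ[k] lgen k Q (LGen.ghost a)]

set_option maxHeartbeats 1000000 in
lemma phi0_rel : ∀ ⦃x y : FreeAlgebra k (LGen Q)⦄, LeavittRel k Q x y →
    FreeAlgebra.lift k (fM k Q) x = FreeAlgebra.lift k (fM k Q) y := by
  intro x y h
  induction h with
  | vertex_mul i j =>
      simp only [map_mul, FreeAlgebra.lift_ι_apply, fM,
        apply_ite (FreeAlgebra.lift k (fM k Q)), map_zero]
      by_cases hij : i = j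
      · subst hij
        ext p q
        fin_cases p <;> fin_cases q <;>
          simp [Matrix.mul_apply, Fin.sum_univ_two,
            Algebra.TensorProduct.tmul_mul_tmul, lvert_mul]
      · ext p q
        rw [if_neg hij]
        fin_cases p <;> fin_cases q <;>
          simp [Matrix.mul_apply, Fin.sum_univ_two,
            Algebra.TensorProduct.tmul_mul_tmul, lvert_mul, hij]
  | sum_vertices =>
      simp only [map_sum, FreeAlgebra.lift_ι_apply, fM, map_one]
      ext p q
      rw [Matrix.sum_apply]
      fin_cases p <;> fin_cases q <;>
        simp [← TensorProduct.sum_tmul, ← TensorProduct.tmul_sum, sum_lvert,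
          Algebra.TensorProduct.one_def, Matrix.one_apply]
  | arrow_tgt a =>
      simp only [map_mul, FreeAlgebra.lift_ι_apply, fM]
      ext p q
      fin_cases p <;> fin_cases q <;>
        simp [Matrix.mul_apply, Fin.sum_univ_two, Algebra.TensorProduct.tmul_mul_tmul,
          lneg_tmul, ltmul_neg, lmul_neg, lneg_mul, tmneg_mul, tmmul_neg, tmneg_mul_neg, tmneg_inj, tgt_mul_arrow]
  | arrow_src a =>
      simp only [map_mul, FreeAlgebra.lift_ι_apply, fM]
      ext p q
      fin_cases p <;> fin_cases q <;>
        simp [Matrix.mul_apply, Fin.sum_univ_two, Algebra.TensorProduct.tmul_mul_tmul,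
          lneg_tmul, ltmul_neg, lmul_neg, lneg_mul, tmneg_mul, tmmul_neg, tmneg_mul_neg, tmneg_inj, arrow_mul_src, lvert_mul]
  | ghost_src a =>
      simp only [map_mul, FreeAlgebra.lift_ι_apply, fM]
      ext p q
      fin_cases p <;> fin_cases q <;>
        simp [Matrix.mul_apply, Fin.sum_univ_two, Algebra.TensorProduct.tmul_mul_tmul,
          lneg_tmul, ltmul_neg, lmul_neg, lneg_mul, tmneg_mul, tmmul_neg, tmneg_mul_neg, tmneg_inj, src_mul_ghost, lvert_mul]
  | ghost_tgt a =>
      simp only [map_mul, FreeAlgebra.lift_ι_apply, fM]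
      ext p q
      fin_cases p <;> fin_cases q <;>
        simp [Matrix.mul_apply, Fin.sum_univ_two, Algebra.TensorProduct.tmul_mul_tmul,
          lneg_tmul, ltmul_neg, lmul_neg, lneg_mul, tmneg_mul, tmmul_neg, tmneg_mul_neg, tmneg_inj, ghost_mul_tgt, lvert_mul]
  | ck1 a b h =>
      simp only [map_mul, FreeAlgebra.lift_ι_apply, fM,
        apply_ite (FreeAlgebra.lift k (fM k Q)), map_zero]
      have hab : lgen k Q (LGen.arrow a) * lgen k Q (LGen.ghost b) =
          if a = b then lvert k Q (Q.tgt a) else 0 := arrow_mul_ghost k Q a b h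
      have h1 : lgen k Q (LGen.arrow a) * lvert k Q (Q.src b) = lgen k Q (LGen.arrow a) := by
        rw [← h]; exact arrow_mul_src k Q a
      have h2 : lvert k Q (Q.src a) * lgen k Q (LGen.ghost b) = lgen k Q (LGen.ghost b) := by
        rw [h]; exact src_mul_ghost k Q b
      by_cases hb : a = b
      · subst hb
        ext p q
        fin_cases p <;> fin_cases q <;>
          simp [Matrix.mul_apply, Fin.sum_univ_two, Algebra.TensorProduct.tmul_mul_tmul,
            lneg_tmul, ltmul_neg, lmul_neg, lneg_mul, tmneg_mul, tmmul_neg, tmneg_mul_neg, tmneg_inj, lneg_mul_neg, hab, h1, h2, tmneg_neg, tmadd_neg]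
      · ext p q
        rw [if_neg hb]
        fin_cases p <;> fin_cases q <;>
          simp [Matrix.mul_apply, Fin.sum_univ_two, Algebra.TensorProduct.tmul_mul_tmul,
            lneg_tmul, ltmul_neg, lmul_neg, lneg_mul, tmneg_mul, tmmul_neg, tmneg_mul_neg, tmneg_inj, lneg_mul_neg, hab, h1, h2, hb, tmneg_neg, tmadd_neg]
  | ck2 v =>
      simp only [map_sum, map_mul, FreeAlgebra.lift_ι_apply]
      have key : ∀ a ∈ Finset.univ.filter (fun a => Q.src a = v),
          fM k Q (LGen.ghost a) * fM k Q (LGen.arrow a) =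
          !![(lgen k Q (LGen.ghost a) * lgen k Q (LGen.arrow a)) ⊗ₜ[k] 1,
            (lgen k Q (LGen.ghost a) * lgen k Q (LGen.arrow a)) ⊗ₜ[k] lvert k Q v
              - lvert k Q v ⊗ₜ[k] (lgen k Q (LGen.ghost a) * lgen k Q (LGen.arrow a));
            0, (1:LeavittAlg k Q) ⊗ₜ[k] (lgen k Q (LGen.ghost a) * lgen k Q (LGen.arrow a))] := by
        intro a ha
        have hv : Q.src a = v := by simpa using ha
        subst hv
        ext p q
        fin_cases p <;> fin_cases q <;>
          simp [fM, Matrix.mul_apply, Fin.sum_univ_two, Algebra.TensorProduct.tmul_mul_tmul,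
            lneg_tmul, ltmul_neg, lmul_neg, lneg_mul, tmneg_mul, tmmul_neg, tmneg_mul_neg,
            src_mul_ghost, ghost_mul_tgt, sub_eq_add_neg, tmneg_neg]
      rw [Finset.sum_congr rfl key]
      ext p q
      rw [Matrix.sum_apply]
      fin_cases p <;> fin_cases q <;>
        simp [fM, ← TensorProduct.sum_tmul, ← TensorProduct.tmul_sum,
          Finset.sum_sub_distrib, ck2_sum, tmsum_sub, tmsub_self]

end Aux3
section Aux4
open TensorProduct

variable (k : Type) [Field k] (Q : QuiverData)

/-- the representation of `L(Q)` in the triangular matrix algebra -/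
def phiM : LeavittAlg k Q →ₐ[k] Matrix (Fin 2) (Fin 2) (LeavittAlg k Q ⊗[k] LeavittAlg k Q) :=
  RingQuot.liftAlgHom k ⟨FreeAlgebra.lift k (fM k Q), phi0_rel k Q⟩

lemma phiM_lgen (g : LGen Q) : phiM k Q (lgen k Q g) = fM k Q g := by
  rw [lgen, phiM, RingQuot.liftAlgHom_mkAlgHom_apply, FreeAlgebra.lift_ι_apply]

/-- the derivation, as a bare linear map -/
def lD : LeavittAlg k Q →ₗ[k] LeavittAlg k Q ⊗[k] LeavittAlg k Q where
  toFun x := phiM k Q x 0 1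
  map_add' x y := by rw [map_add, Matrix.add_apply]
  map_smul' c x := by rw [map_smul, Matrix.smul_apply, RingHom.id_apply]

lemma lD_apply (x : LeavittAlg k Q) : lD k Q x = phiM k Q x 0 1 := rfl

lemma phiM_struct (x : LeavittAlg k Q) :
    phiM k Q x 1 0 = 0 ∧ phiM k Q x 0 0 = lsigma k Q x ⊗ₜ[k] 1 ∧
      phiM k Q x 1 1 = 1 ⊗ₜ[k] x := by
  obtain ⟨z, rfl⟩ := RingQuot.mkAlgHom_surjective k (LeavittRel k Q) x
  induction z using FreeAlgebra.induction with
  | grade0 r =>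
      rw [AlgHom.commutes, AlgHom.commutes]
      refine ⟨?_, ?_, ?_⟩
      · rw [Matrix.algebraMap_matrix_apply]; simp
      · rw [Matrix.algebraMap_matrix_apply, if_pos rfl, AlgHom.commutes,
          Algebra.TensorProduct.algebraMap_apply]
      · rw [Matrix.algebraMap_matrix_apply, if_pos rfl,
          Algebra.TensorProduct.algebraMap_apply, Algebra.algebraMap_eq_smul_one]
        exact TensorProduct.smul_tmul r 1 1
  | grade1 g =>
      rw [show (RingQuot.mkAlgHom k (LeavittRel k Q)) (FreeAlgebra.ι k g) = lgen k Q g from rfl,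
        phiM_lgen, lsigma_lgen]
      cases g <;> simp [fM, sgen, lneg_tmul, lvert]
  | mul a b ha hb =>
      obtain ⟨ha0, ha1, ha2⟩ := ha
      obtain ⟨hb0, hb1, hb2⟩ := hb
      rw [map_mul, map_mul, map_mul]
      refine ⟨?_, ?_, ?_⟩ <;>
        rw [Matrix.mul_apply, Fin.sum_univ_two] <;>
          simp [ha0, ha1, ha2, hb0, hb1, hb2, Algebra.TensorProduct.tmul_mul_tmul]
  | add a b ha hb =>
      obtain ⟨ha0, ha1, ha2⟩ := ha
      obtain ⟨hb0, hb1, hb2⟩ := hb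
      rw [map_add, map_add, map_add]
      refine ⟨?_, ?_, ?_⟩ <;>
        simp [Matrix.add_apply, ha0, ha1, ha2, hb0, hb1, hb2, TensorProduct.tmul_add,
          TensorProduct.add_tmul]

lemma tmul_one_mul (a : LeavittAlg k Q) (m : LeavittAlg k Q ⊗[k] LeavittAlg k Q) :
    (a ⊗ₜ[k] 1) * m = lAct k Q a m := by
  induction m with
  | zero => simp [map_zero]
  | tmul u v => rw [Algebra.TensorProduct.tmul_mul_tmul, one_mul]
                rfl
  | add u v hu hv => rw [mul_add, hu, hv, map_add]

lemma mul_one_tmul (b : LeavittAlg k Q) (m : LeavittAlg k Q ⊗[k] LeavittAlg k Q) :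
    m * ((1 : LeavittAlg k Q) ⊗ₜ[k] b) = rAct k Q b m := by
  induction m with
  | zero => simp [map_zero]
  | tmul u v => rw [Algebra.TensorProduct.tmul_mul_tmul, mul_one]
                rfl
  | add u v hu hv => rw [add_mul, hu, hv, map_add]

/-- the key Leibniz-type identity for `lD` -/
lemma lD_mul (x y : LeavittAlg k Q) :
    lD k Q (x * y) = rAct k Q y (lD k Q x) + lAct k Q (lsigma k Q x) (lD k Q y) := by
  rw [lD_apply, map_mul, Matrix.mul_apply, Fin.sum_univ_two, lD_apply, lD_apply,
    (phiM_struct k Q x).2.1, (phiM_struct k Q y).2.2, tmul_one_mul, mul_one_tmul]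
  rw [add_comm]

lemma lD_lgen (g : LGen Q) : lD k Q (lgen k Q g) = fM k Q g 0 1 := by
  rw [lD_apply, phiM_lgen]

lemma lD_lvert (i : Q.V) : lD k Q (lvert k Q i) = 0 := by
  rw [lvert, lD_lgen]; simp [fM]

lemma lD_arrow (a : Q.A) : lD k Q (lgen k Q (LGen.arrow a)) =
    -(lgen k Q (LGen.arrow a) ⊗ₜ[k] lvert k Q (Q.src a)) := by
  rw [lD_lgen]; simp [fM]

lemma lD_ghost (a : Q.A) : lD k Q (lgen k Q (LGen.ghost a)) =
    -(lvert k Q (Q.src a) ⊗ₜ[k] lgen k Q (LGen.ghost a)) := by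
  rw [lD_lgen]; simp [fM]

end Aux4
section Aux5
open TensorProduct

variable (k : Type) [Field k] (Q : QuiverData)

lemma ksign_add (a b : ℤ) : ksign (a + b) = ksign a * ksign b := by
  unfold ksign
  by_cases ha : Even a <;> by_cases hb : Even b <;>
    simp [Int.even_add, ha, hb]

lemma lgen_mem_grading (g : LGen Q) :
    lgen k Q g ∈ leavittGrading k Q (lgenDeg Q g) :=
  Submodule.subset_span ⟨[g], by simp, by simp⟩

lemma one_mem_grading : (1 : LeavittAlg k Q) ∈ leavittGrading k Q 0 :=
  Submodule.subset_span ⟨[], by simp, by simp⟩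

lemma lvert_mem_grading (i : Q.V) : lvert k Q i ∈ leavittGrading k Q 0 :=
  lgen_mem_grading k Q (LGen.vertex i)

lemma grading_mul {m m' : ℤ} {x y : LeavittAlg k Q} (hx : x ∈ leavittGrading k Q m)
    (hy : y ∈ leavittGrading k Q m') : x * y ∈ leavittGrading k Q (m + m') := by
  induction hx using Submodule.span_induction with
  | mem x hxs =>
      induction hy using Submodule.span_induction with
      | mem y hys =>
          obtain ⟨w, hw, rfl⟩ := hxs
          obtain ⟨w', hw', rfl⟩ := hys
          exact Submodule.subset_span ⟨w ++ w',
            by rw [List.map_append, List.sum_append, hw, hw'],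
            by rw [List.map_append, List.prod_append]⟩
      | zero => rw [mul_zero]; exact zero_mem _
      | add a b _ _ ha hb => rw [mul_add]; exact add_mem ha hb
      | smul c a _ ha => rw [mul_smul_comm]; exact Submodule.smul_mem _ _ ha
  | zero => rw [zero_mul]; exact zero_mem _
  | add a b _ _ ha hb => rw [add_mul]; exact add_mem ha hb
  | smul c a _ ha => rw [smul_mul_assoc]; exact Submodule.smul_mem _ _ ha

lemma lsigma_prod (w : List (LGen Q)) :
    lsigma k Q ((w.map (lgen k Q)).prod) =
      ksign ((w.map (lgenDeg Q)).sum) • (w.map (lgen k Q)).prod := by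
  induction w with
  | nil => simp [ksign]
  | cons g w ih =>
      rw [List.map_cons, List.map_cons, List.prod_cons, List.sum_cons, map_mul, ih,
        ksign_add, mul_comm (ksign (lgenDeg Q g)), mul_smul]
      have hg : lsigma k Q (lgen k Q g) = ksign (lgenDeg Q g) • lgen k Q g := by
        cases g <;> simp [lsigma_lgen, sgen, lgenDeg, ksign, lvert]
      rw [hg, smul_mul_assoc, mul_smul_comm]
      exact smul_comm _ _ _

lemma lsigma_of_grading {n : ℤ} {x : LeavittAlg k Q} (hx : x ∈ leavittGrading k Q n) :
    lsigma k Q x = ksign n • x := by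
  induction hx using Submodule.span_induction with
  | mem x hxs =>
      obtain ⟨w, hw, rfl⟩ := hxs
      rw [lsigma_prod, hw]
  | zero => simp
  | add a b _ _ ha hb => rw [map_add, ha, hb]; exact (smul_add _ _ _).symm
  | smul c a _ ha => rw [map_smul, ha, smul_comm]

lemma span_monomials_mul {x y : LeavittAlg k Q}
    (hx : x ∈ Submodule.span k {x : LeavittAlg k Q |
      ∃ w : List (LGen Q), x = (w.map (lgen k Q)).prod})
    (hy : y ∈ Submodule.span k {x : LeavittAlg k Q |
      ∃ w : List (LGen Q), x = (w.map (lgen k Q)).prod}) :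
    x * y ∈ Submodule.span k {x : LeavittAlg k Q |
      ∃ w : List (LGen Q), x = (w.map (lgen k Q)).prod} := by
  induction hx using Submodule.span_induction with
  | mem u hu =>
      induction hy using Submodule.span_induction with
      | mem v hv =>
          obtain ⟨w, rfl⟩ := hu
          obtain ⟨w', rfl⟩ := hv
          exact Submodule.subset_span ⟨w ++ w', by rw [List.map_append, List.prod_append]⟩
      | zero => rw [mul_zero]; exact zero_mem _
      | add a b _ _ ha hb => rw [mul_add]; exact add_mem ha hb
      | smul c a _ ha => rw [mul_smul_comm]; exact Submodule.smul_mem _ _ ha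
  | zero => rw [zero_mul]; exact zero_mem _
  | add a b _ _ ha hb => rw [add_mul]; exact add_mem ha hb
  | smul c a _ ha => rw [smul_mul_assoc]; exact Submodule.smul_mem _ _ ha

/-- every element of `L(Q)` is a linear combination of monomials in the generators -/
lemma mem_span_monomials (x : LeavittAlg k Q) :
    x ∈ Submodule.span k {x : LeavittAlg k Q |
      ∃ w : List (LGen Q), x = (w.map (lgen k Q)).prod} := by
  obtain ⟨z, rfl⟩ := RingQuot.mkAlgHom_surjective k (LeavittRel k Q) x
  induction z using FreeAlgebra.induction with
  | grade0 r =>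
      rw [AlgHom.commutes, Algebra.algebraMap_eq_smul_one]
      exact Submodule.smul_mem _ _ (Submodule.subset_span ⟨[], by simp⟩)
  | grade1 g => exact Submodule.subset_span ⟨[g], by simp [lgen]⟩
  | mul a b ha hb =>
      rw [map_mul]
      exact span_monomials_mul k Q ha hb
  | add a b ha hb => rw [map_add]; exact add_mem ha hb

end Aux5
section Aux6
open TensorProduct

variable (k : Type) [Field k] (Q : QuiverData)

lemma lAct_tmul (x a b : LeavittAlg k Q) :
    lAct k Q x (a ⊗ₜ[k] b) = (x * a) ⊗ₜ[k] b := rfl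

lemma rAct_tmul (y a b : LeavittAlg k Q) :
    rAct k Q y (a ⊗ₜ[k] b) = a ⊗ₜ[k] (b * y) := rfl

lemma lAct_mem_NSub (x : LeavittAlg k Q) {m : LeavittAlg k Q ⊗[k] LeavittAlg k Q}
    (hm : m ∈ NSub k Q) : lAct k Q x m ∈ NSub k Q := by
  induction hm using Submodule.span_induction with
  | mem z hz =>
      obtain ⟨i, a, b, rfl⟩ := hz
      exact Submodule.subset_span ⟨i, x * a, b, by rw [lAct_tmul, mul_assoc]⟩
  | zero => rw [map_zero]; exact zero_mem _
  | add u v _ _ hu hv => rw [map_add]; exact add_mem hu hv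
  | smul c u _ hu => rw [map_smul]; exact Submodule.smul_mem _ _ hu

lemma rAct_mem_NSub (y : LeavittAlg k Q) {m : LeavittAlg k Q ⊗[k] LeavittAlg k Q}
    (hm : m ∈ NSub k Q) : rAct k Q y m ∈ NSub k Q := by
  induction hm using Submodule.span_induction with
  | mem z hz =>
      obtain ⟨i, a, b, rfl⟩ := hz
      exact Submodule.subset_span ⟨i, a, b * y, by rw [rAct_tmul, mul_assoc]⟩
  | zero => rw [map_zero]; exact zero_mem _
  | add u v _ _ hu hv => rw [map_add]; exact add_mem hu hv
  | smul c u _ hu => rw [map_smul]; exact Submodule.smul_mem _ _ hu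

lemma tmneg_mem {N : Submodule k (LeavittAlg k Q ⊗[k] LeavittAlg k Q)}
    {m : LeavittAlg k Q ⊗[k] LeavittAlg k Q} (h : m ∈ N) : -m ∈ N := by
  rw [show -m = (-1 : k) • m from (neg_one_smul k m).symm]; exact N.smul_mem _ h

lemma ksign_smul_mem {N : Submodule k (LeavittAlg k Q ⊗[k] LeavittAlg k Q)}
    {m : LeavittAlg k Q ⊗[k] LeavittAlg k Q} (n : ℤ) (hm : m ∈ N) : ksign n • m ∈ N := by
  unfold ksign
  split
  · rw [one_zsmul]; exact hm
  · rw [neg_one_zsmul]; exact tmneg_mem k Q hm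

lemma lAct_neg (x : LeavittAlg k Q) (m : LeavittAlg k Q ⊗[k] LeavittAlg k Q) :
    lAct k Q (-x) m = -lAct k Q x m := by
  rw [← tmul_one_mul, ← tmul_one_mul, lneg_tmul, tmneg_mul]

lemma lAct_ksign_smul (n : ℤ) (x : LeavittAlg k Q)
    (m : LeavittAlg k Q ⊗[k] LeavittAlg k Q) :
    lAct k Q (ksign n • x) m = ksign n • lAct k Q x m := by
  unfold ksign
  split
  · rw [one_zsmul, one_zsmul]
  · rw [neg_one_zsmul, neg_one_zsmul, lAct_neg]

lemma lAct_mem_TGrading {m n : ℤ} {x : LeavittAlg k Q}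
    {z : LeavittAlg k Q ⊗[k] LeavittAlg k Q} (hx : x ∈ leavittGrading k Q m)
    (hz : z ∈ TGrading k Q n) : lAct k Q x z ∈ TGrading k Q (m + n) := by
  induction hz using Submodule.span_induction with
  | mem u hu =>
      obtain ⟨m₁, m₂, a, b, ha, hb, hsum, rfl⟩ := hu
      exact Submodule.subset_span ⟨m + m₁, m₂, x * a, b, grading_mul k Q hx ha, hb,
        by omega, by rw [lAct_tmul]⟩
  | zero => rw [map_zero]; exact zero_mem _
  | add u v _ _ hu hv => rw [map_add]; exact add_mem hu hv
  | smul c u _ hu => rw [map_smul]; exact Submodule.smul_mem _ _ hu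

lemma rAct_mem_TGrading {m n : ℤ} {y : LeavittAlg k Q}
    {z : LeavittAlg k Q ⊗[k] LeavittAlg k Q} (hy : y ∈ leavittGrading k Q m)
    (hz : z ∈ TGrading k Q n) : rAct k Q y z ∈ TGrading k Q (n + m) := by
  induction hz using Submodule.span_induction with
  | mem u hu =>
      obtain ⟨m₁, m₂, a, b, ha, hb, hsum, rfl⟩ := hu
      exact Submodule.subset_span ⟨m₁, m₂ + m, a, b * y, ha, grading_mul k Q hb hy,
        by omega, by rw [rAct_tmul]⟩
  | zero => rw [map_zero]; exact zero_mem _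
  | add u v _ _ hu hv => rw [map_add]; exact add_mem hu hv
  | smul c u _ hu => rw [map_smul]; exact Submodule.smul_mem _ _ hu

lemma prod_mem_grading (w : List (LGen Q)) :
    (w.map (lgen k Q)).prod ∈ leavittGrading k Q ((w.map (lgenDeg Q)).sum) :=
  Submodule.subset_span ⟨w, rfl, rfl⟩

lemma lD_one : lD k Q 1 = 0 := by
  rw [lD_apply, map_one]
  exact Matrix.one_apply_ne (by decide)

lemma lD_algebraMap (r : k) : lD k Q (algebraMap k (LeavittAlg k Q) r) = 0 := by
  rw [Algebra.algebraMap_eq_smul_one, map_smul, lD_one, smul_zero]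

lemma lD_lgen_mem_NSub (g : LGen Q) : lD k Q (lgen k Q g) ∈ NSub k Q := by
  cases g with
  | vertex i => rw [show lgen k Q (LGen.vertex i) = lvert k Q i from rfl, lD_lvert]
                exact zero_mem _
  | arrow a =>
      rw [lD_arrow]
      exact tmneg_mem k Q (Submodule.subset_span ⟨Q.src a, lgen k Q (LGen.arrow a), 1,
        by rw [arrow_mul_src, mul_one]⟩)
  | ghost a =>
      rw [lD_ghost]
      exact tmneg_mem k Q (Submodule.subset_span ⟨Q.src a, 1, lgen k Q (LGen.ghost a),
        by rw [one_mul, src_mul_ghost]⟩)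

lemma lD_mem_NSub (x : LeavittAlg k Q) : lD k Q x ∈ NSub k Q := by
  obtain ⟨z, rfl⟩ := RingQuot.mkAlgHom_surjective k (LeavittRel k Q) x
  induction z using FreeAlgebra.induction with
  | grade0 r => rw [AlgHom.commutes, lD_algebraMap]; exact zero_mem _
  | grade1 g => exact lD_lgen_mem_NSub k Q g
  | mul a b ha hb =>
      rw [map_mul, lD_mul]
      exact add_mem (rAct_mem_NSub k Q _ ha) (lAct_mem_NSub k Q _ hb)
  | add a b ha hb => rw [map_add, map_add]; exact add_mem ha hb

lemma lD_lgen_mem_TGrading (g : LGen Q) :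
    lD k Q (lgen k Q g) ∈ TGrading k Q (lgenDeg Q g) := by
  cases g with
  | vertex i => rw [show lgen k Q (LGen.vertex i) = lvert k Q i from rfl, lD_lvert]
                exact zero_mem _
  | arrow a =>
      rw [lD_arrow]
      exact tmneg_mem k Q (Submodule.subset_span ⟨1, 0, lgen k Q (LGen.arrow a),
        lvert k Q (Q.src a), lgen_mem_grading k Q (LGen.arrow a),
        lvert_mem_grading k Q (Q.src a), by simp [lgenDeg], rfl⟩)
  | ghost a =>
      rw [lD_ghost]
      exact tmneg_mem k Q (Submodule.subset_span ⟨0, -1, lvert k Q (Q.src a),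
        lgen k Q (LGen.ghost a), lvert_mem_grading k Q (Q.src a),
        lgen_mem_grading k Q (LGen.ghost a), by simp [lgenDeg], rfl⟩)

lemma lD_prod_mem_TGrading (w : List (LGen Q)) :
    lD k Q ((w.map (lgen k Q)).prod) ∈ TGrading k Q ((w.map (lgenDeg Q)).sum) := by
  induction w with
  | nil =>
      simp only [List.map_nil, List.prod_nil, List.sum_nil, lD_one]
      exact zero_mem _
  | cons g w ih =>
      rw [List.map_cons, List.map_cons, List.prod_cons, List.sum_cons, lD_mul]
      refine add_mem ?_ ?_
      · exact rAct_mem_TGrading k Q (prod_mem_grading k Q w) (lD_lgen_mem_TGrading k Q g)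
      · rw [lsigma_of_grading k Q (lgen_mem_grading k Q g), lAct_ksign_smul]
        exact ksign_smul_mem k Q _
          (lAct_mem_TGrading k Q (lgen_mem_grading k Q g) ih)

lemma lD_mem_TGrading (n : ℤ) (x : LeavittAlg k Q) (hx : x ∈ leavittGrading k Q n) :
    lD k Q x ∈ TGrading k Q n := by
  induction hx using Submodule.span_induction with
  | mem u hu =>
      obtain ⟨w, hw, rfl⟩ := hu
      rw [← hw]
      exact lD_prod_mem_TGrading k Q w
  | zero => rw [map_zero]; exact zero_mem _
  | add u v _ _ hu hv => rw [map_add]; exact add_mem hu hv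
  | smul c u _ hu => rw [map_smul]; exact Submodule.smul_mem _ _ hu

lemma lD_leibniz (n : ℤ) (x y : LeavittAlg k Q) (hx : x ∈ leavittGrading k Q n) :
    lD k Q (x * y) = rAct k Q y (lD k Q x) + ksign n • lAct k Q x (lD k Q y) := by
  rw [lD_mul, lsigma_of_grading k Q hx, lAct_ksign_smul]

end Aux6

open TensorProduct in
/-- **Lemma 4.3 of Chen–Li–Wang.**  Let `Q` be a finite quiver without sinks over a field
`k`, `L = L(Q)` the Leavitt path algebra and `E = kQ₀ ⊆ L`.  Then there is a unique graded
`E`-derivation `D : L → ⊕_{i∈Q₀} Le_i ⊗ sk ⊗ e_iL` of degree `-1` satisfying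
`D(α) = -α ⊗ s ⊗ e_{s(α)}` and `D(α*) = -e_{s(α)} ⊗ s ⊗ α*` for every arrow `α ∈ Q₁`.

Here the bimodule `⊕_i Le_i ⊗ sk ⊗ e_iL` is realized as the subspace `NSub` of `L ⊗ L`
spanned by the elements `(a e_i) ⊗ (e_i b)` (the invertible marker `s` of degree `-1` is
suppressed), so that "`D` has degree `-1`" becomes: `D` sends the degree-`n` component of
`L` into the degree-`n` component of `L ⊗ L`; the graded Leibniz rule
`D(xy) = D(x)y + (-1)^{|x|} x D(y)` and the conditions `D(e_i) = 0` are imposed on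
homogeneous elements. -/
theorem leavitt_unique_graded_derivation (k : Type) [Field k]
    (Q : QuiverData) (hQ : Q.NoSinks) :
    ∃! D : LeavittAlg k Q →ₗ[k] (LeavittAlg k Q ⊗[k] LeavittAlg k Q),
      (∀ x, D x ∈ NSub k Q) ∧
      (∀ (n : ℤ) (x), x ∈ leavittGrading k Q n → D x ∈ TGrading k Q n) ∧
      (∀ (n : ℤ) (x y : LeavittAlg k Q), x ∈ leavittGrading k Q n →
        D (x * y) = rAct k Q y (D x) + ksign n • lAct k Q x (D y)) ∧
      (∀ i : Q.V, D (lvert k Q i) = 0) ∧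
      (∀ a : Q.A, D (lgen k Q (LGen.arrow a)) =
        -(lgen k Q (LGen.arrow a) ⊗ₜ[k] lvert k Q (Q.src a))) ∧
      ∀ a : Q.A, D (lgen k Q (LGen.ghost a)) =
        -(lvert k Q (Q.src a) ⊗ₜ[k] lgen k Q (LGen.ghost a)) := by

  refine ⟨lD k Q, ⟨lD_mem_NSub k Q, lD_mem_TGrading k Q, lD_leibniz k Q,
    lD_lvert k Q, lD_arrow k Q, lD_ghost k Q⟩, ?_⟩
  rintro D' ⟨-, -, hL, hV, hA, hGh⟩
  have hgen : ∀ g : LGen Q, D' (lgen k Q g) = lD k Q (lgen k Q g) := by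
    intro g
    cases g with
    | vertex i =>
        rw [show lgen k Q (LGen.vertex i) = lvert k Q i from rfl, hV, lD_lvert]
    | arrow a => rw [hA, lD_arrow]
    | ghost a => rw [hGh, lD_ghost]
  have hone : D' 1 = 0 := by
    rw [← sum_lvert k Q, map_sum]
    simp [hV]
  have hmono : ∀ w : List (LGen Q),
      D' ((w.map (lgen k Q)).prod) = lD k Q ((w.map (lgen k Q)).prod) := by
    intro w
    induction w with
    | nil => simp only [List.map_nil, List.prod_nil, hone, lD_one]
    | cons g w ih =>
        rw [List.map_cons, List.prod_cons,
          hL (lgenDeg Q g) _ _ (lgen_mem_grading k Q g),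
          lD_leibniz k Q (lgenDeg Q g) _ _ (lgen_mem_grading k Q g),
          hgen, ih]
  ext x
  have hx := mem_span_monomials k Q x
  induction hx using Submodule.span_induction with
  | mem u hu => obtain ⟨w, rfl⟩ := hu; exact hmono w
  | zero => rw [map_zero, map_zero]
  | add u v _ _ hu hv => rw [map_add, map_add, hu, hv]
  | smul c u _ hu => rw [map_smul, map_smul, hu]
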